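/- Let X be a finite set, C a nonempty finite concept class on X, and μ a probability measure on X with μ(x) > 0 for all x ∈ X. Define d(A,B) as the expected value of Ldim(C) − Ldim(C_{x = B(x)}) for x drawn from μ conditioned on the symmetric difference Δ(A,B), for distinct A, B ∈ C. Then there is at least one concept A ∈ C whose query rank inf_{B ∈ C, B ≠ A} d(A,B) is at least 1/2. -/

import Mathlib

/-!
Definitions for query learning: concepts are total functions `X → Bool`,
partially specified subsets are functions `X → Option Bool`.
-/

/-- A total concept `f` extends the partially specified subset `A`
(i.e. agrees with `A` on its domain). -/
def PExtends {X : Type*} (f : X → Bool) (A : X → Option Bool) : Prop :=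
  ∀ x b, A x = some b → f x = b

/-- `A` is `n`-consistent with `C`: every restriction of `A` of size at most `n`
has an extension in `C`. -/
def NConsistent {X : Type*} (C : Set (X → Bool)) (A : X → Option Bool) (n : ℕ) : Prop :=
  ∀ s : Finset X, s.card ≤ n → ∃ f ∈ C, ∀ x ∈ s, ∀ b, A x = some b → f x = b

/-- `A` is finitely consistent with `C`: every finite restriction of `A`
has an extension in `C`. -/
def FinitelyConsistent {X : Type*} (C : Set (X → Bool)) (A : X → Option Bool) : Prop :=
  ∀ s : Finset X, ∃ f ∈ C, ∀ x ∈ s, ∀ b, A x = some b → f x = b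

/-- There is a complete binary tree of height `d`, with internal nodes labelled by
elements of `X` (here indexed by the binary path leading to the node), whose leaves
can each be properly labelled by a concept of `C` agreeing with the root-to-leaf path. -/
def LdimGe {X : Type*} (C : Set (X → Bool)) (d : ℕ) : Prop :=
  ∃ t : List Bool → X, ∀ σ : List Bool, σ.length = d →
    ∃ f ∈ C, ∀ k, k < d → f (t (σ.take k)) = σ.getD k false

/-- The Littlestone dimension of `C`, valued in `ℕ∞` (`⊤` = no maximum exists). -/
noncomputable def Ldim {X : Type*} (C : Set (X → Bool)) : ℕ∞ :=
  sSup {n : ℕ∞ | ∃ d : ℕ, n = d ∧ LdimGe C d}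

/-- `xs` is a valid sequence of counterexamples that an adversarial teacher with
target concept `A` can return against the learner strategy `s` (the learner's next
hypothesis is a function of the list of counterexamples received so far). -/
def ValidEQPlay {X : Type*} (A : X → Bool) (s : List X → (X → Bool)) (xs : List X) : Prop :=
  ∀ (i : ℕ) (h : i < xs.length),
    s (xs.take i) (xs.get ⟨i, h⟩) ≠ A (xs.get ⟨i, h⟩)

/-- Some learner strategy with hypotheses from `H` identifies every concept of `C`
in at most `n` equivalence queries, against every teacher. -/
def EQLearnIn {X : Type*} (C H : Set (X → Bool)) (n : ℕ) : Prop :=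
  ∃ s : List X → (X → Bool), (∀ l, s l ∈ H) ∧
    ∀ A ∈ C, ∀ xs : List X, ValidEQPlay A s xs → xs.length < n

/-- The equivalence-query learning complexity `LC^EQ(C, H)`, valued in `ℕ∞`. -/
noncomputable def LCEQ {X : Type*} (C H : Set (X → Bool)) : ℕ∞ :=
  sInf {n : ℕ∞ | ∃ m : ℕ, n = m ∧ EQLearnIn C H m}

/-- `xs` is a valid play of a teacher with target `A` against the EQ+MQ learner
strategy `s`: the history records pairs `(x, A x)`; at each step, if the learner
makes the membership query `x` the teacher answers `(x, A x)`, and if the learner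
makes an equivalence query `B` the teacher returns a counterexample to `B`. -/
def ValidEMPlay {X : Type*} (A : X → Bool) (s : List (X × Bool) → X ⊕ (X → Bool))
    (xs : List (X × Bool)) : Prop :=
  ∀ (i : ℕ) (h : i < xs.length),
    (xs.get ⟨i, h⟩).2 = A (xs.get ⟨i, h⟩).1 ∧
    (∀ x, s (xs.take i) = Sum.inl x → (xs.get ⟨i, h⟩).1 = x) ∧
    (∀ B, s (xs.take i) = Sum.inr B → B (xs.get ⟨i, h⟩).1 ≠ A (xs.get ⟨i, h⟩).1)

/-- Some learner strategy making membership queries on elements of `X` and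
equivalence queries from `H` identifies every concept of `C` in at most `n`
queries in total, against every teacher. -/
def EMLearnIn {X : Type*} (C H : Set (X → Bool)) (n : ℕ) : Prop :=
  ∃ s : List (X × Bool) → X ⊕ (X → Bool),
    (∀ l B, s l = Sum.inr B → B ∈ H) ∧
    ∀ A ∈ C, ∀ xs : List (X × Bool), ValidEMPlay A s xs → xs.length < n

/-- The EQ+MQ learning complexity `LC^{EQ+MQ}(C, H)`, valued in `ℕ∞`. -/
noncomputable def LCEM {X : Type*} (C H : Set (X → Bool)) : ℕ∞ :=
  sInf {n : ℕ∞ | ∃ m : ℕ, n = m ∧ EMLearnIn C H m}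

/-- Every total function `X → Bool` that is `n`-consistent with `C` belongs to `H`. -/
def CDimLe {X : Type*} (C H : Set (X → Bool)) (n : ℕ) : Prop :=
  ∀ A : X → Bool, NConsistent C (fun x => some (A x)) n → A ∈ H

/-- The consistency dimension `C(C, H)`, valued in `ℕ∞`. -/
noncomputable def CDim {X : Type*} (C H : Set (X → Bool)) : ℕ∞ :=
  sInf {n : ℕ∞ | ∃ m : ℕ, n = m ∧ CDimLe C H m}

/-- Every partially specified subset that is `n`-consistent with `C` has a total
extension in `H`. -/
def SCDimLe {X : Type*} (C H : Set (X → Bool)) (n : ℕ) : Prop :=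
  ∀ A : X → Option Bool, NConsistent C A n → ∃ B ∈ H, PExtends B A

/-- The strong consistency dimension `SC(C, H)`, valued in `ℕ∞`. -/
noncomputable def SCDim {X : Type*} (C H : Set (X → Bool)) : ℕ∞ :=
  sInf {n : ℕ∞ | ∃ m : ℕ, n = m ∧ SCDimLe C H m}

/-- The weight `d(A,B)` of the directed edge from `A` to `B` in the thicket query
graph: the expected value of `Ldim C − Ldim C_{x = B(x)}` for `x` drawn from `μ`
conditioned on the symmetric difference `Δ(A,B)`. -/
noncomputable def edgeWeight {X : Type*} [Fintype X] (C : Set (X → Bool))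
    (μ : X → ℝ) (A B : X → Bool) : ℝ :=
  ∑ a ∈ Finset.univ.filter (fun x => A x ≠ B x),
    (μ a / ∑ b ∈ Finset.univ.filter (fun x => A x ≠ B x), μ b) *
      (((Ldim C).toNat : ℝ) - ((Ldim {f ∈ C | f a = B a}).toNat : ℝ))

section Aux
variable {X : Type*}

lemma ldimGe_mono_set {C D : Set (X → Bool)} (h : C ⊆ D) {d : ℕ} (hC : LdimGe C d) :
    LdimGe D d := by
  obtain ⟨t, ht⟩ := hC
  exact ⟨t, fun σ hσ => by
    obtain ⟨f, hf, hfk⟩ := ht σ hσ; exact ⟨f, h hf, hfk⟩⟩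

lemma ldimGe_nonempty {C : Set (X → Bool)} {d : ℕ} (h : LdimGe C d) : C.Nonempty := by
  obtain ⟨t, ht⟩ := h
  obtain ⟨f, hf, -⟩ := ht (List.replicate d false) (by simp)
  exact ⟨f, hf⟩

lemma ldimGe_zero [Nonempty X] {C : Set (X → Bool)} (h : C.Nonempty) : LdimGe C 0 := by
  obtain ⟨f, hf⟩ := h
  exact ⟨fun _ => Classical.arbitrary X, fun σ hσ => ⟨f, hf, fun k hk => by omega⟩⟩

lemma ldimGe_mono_nat {C : Set (X → Bool)} {d d' : ℕ} (h : d' ≤ d) (hC : LdimGe C d) :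
    LdimGe C d' := by
  obtain ⟨t, ht⟩ := hC
  refine ⟨t, fun σ hσ => ?_⟩
  obtain ⟨f, hf, hfk⟩ := ht (σ ++ List.replicate (d - d') false) (by simp [hσ]; omega)
  refine ⟨f, hf, fun k hk => ?_⟩
  have h1 : (σ ++ List.replicate (d - d') false).take k = σ.take k :=
    List.take_append_of_le_length (by omega)
  have h2 : (σ ++ List.replicate (d - d') false).getD k false = σ.getD k false := by
    unfold List.getD
    rw [List.getElem?_append_left (by omega)]
  have := hfk k (by omega)
  rw [h1, h2] at this
  exact this

lemma ldimGe_combine {C : Set (X → Bool)} {a : X} {d : ℕ}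
    (h0 : LdimGe {f ∈ C | f a = false} d) (h1 : LdimGe {f ∈ C | f a = true} d) :
    LdimGe C (d + 1) := by
  obtain ⟨t0, ht0⟩ := h0
  obtain ⟨t1, ht1⟩ := h1
  refine ⟨fun p => match p with
    | [] => a
    | b :: p' => cond b (t1 p') (t0 p'), fun σ hσ => ?_⟩
  match σ, hσ with
  | b :: σ', hσ =>
    have hσ' : σ'.length = d := by simpa using hσ
    cases b with
    | false =>
      obtain ⟨f, hf, hfk⟩ := ht0 σ' hσ'
      refine ⟨f, hf.1, fun k hk => ?_⟩
      match k with
      | 0 => simpa using hf.2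
      | (j+1) => simpa using hfk j (by omega)
    | true =>
      obtain ⟨f, hf, hfk⟩ := ht1 σ' hσ'
      refine ⟨f, hf.1, fun k hk => ?_⟩
      match k with
      | 0 => simpa using hf.2
      | (j+1) => simpa using hfk j (by omega)

lemma ldimGe_split {C : Set (X → Bool)} {d : ℕ} (h : LdimGe C (d + 1)) :
    ∃ x : X, LdimGe {f ∈ C | f x = false} d ∧ LdimGe {f ∈ C | f x = true} d := by
  obtain ⟨t, ht⟩ := h
  refine ⟨t [], ?_, ?_⟩
  · refine ⟨fun p => t (false :: p), fun σ hσ => ?_⟩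
    obtain ⟨f, hf, hfk⟩ := ht (false :: σ) (by simp [hσ])
    refine ⟨f, ⟨hf, by simpa using hfk 0 (by omega)⟩, fun j hj => by
      simpa using hfk (j+1) (by omega)⟩
  · refine ⟨fun p => t (true :: p), fun σ hσ => ?_⟩
    obtain ⟨f, hf, hfk⟩ := ht (true :: σ) (by simp [hσ])
    refine ⟨f, ⟨hf, by simpa using hfk 0 (by omega)⟩, fun j hj => by
      simpa using hfk (j+1) (by omega)⟩

lemma ldimGe_lt_ncard {C : Set (X → Bool)} (hfin : C.Finite) {d : ℕ} (h : LdimGe C d) :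
    d < C.ncard := by
  induction d generalizing C with
  | zero => exact (Set.ncard_pos hfin).mpr (ldimGe_nonempty h)
  | succ d ih =>
    obtain ⟨x, h0, h1⟩ := ldimGe_split h
    have hf0 : ({f ∈ C | f x = false} : Set (X → Bool)).Finite :=
      hfin.subset (fun f hf => hf.1)
    have hf1 : ({f ∈ C | f x = true} : Set (X → Bool)).Finite :=
      hfin.subset (fun f hf => hf.1)
    have i0 := ih hf0 h0
    have i1 := ih hf1 h1
    have hunion : {f ∈ C | f x = false} ∪ {f ∈ C | f x = true} = C := by
      ext f
      constructor
      · rintro (⟨h, -⟩ | ⟨h, -⟩) <;> exact h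
      · intro hf
        cases hfx : f x
        · exact Or.inl ⟨hf, hfx⟩
        · exact Or.inr ⟨hf, hfx⟩
    have hdisj : Disjoint {f ∈ C | f x = false} {f ∈ C | f x = true} := by
      rw [Set.disjoint_left]
      rintro f ⟨-, hf⟩ ⟨-, hg⟩
      simp_all
    have hcard := Set.ncard_union_eq hdisj hf0 hf1
    rw [hunion] at hcard
    rw [hcard]
    have := Nat.add_lt_add i0 i1
    linarith

noncomputable def LdimNat (C : Set (X → Bool)) : ℕ := sSup {d | LdimGe C d}

lemma bddAbove_ldimSet {C : Set (X → Bool)} (hfin : C.Finite) : BddAbove {d | LdimGe C d} := by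
  rw [bddAbove_def]
  exact ⟨C.ncard, fun d hd => (ldimGe_lt_ncard hfin hd).le⟩

lemma ldimGe_ldimNat [Nonempty X] {C : Set (X → Bool)} (hfin : C.Finite) (hne : C.Nonempty) :
    LdimGe C (LdimNat C) := by
  have h := Nat.sSup_mem (s := {d | LdimGe C d})
    ⟨0, show LdimGe C 0 from ldimGe_zero hne⟩ (bddAbove_ldimSet hfin)
  exact h

lemma le_ldimNat {C : Set (X → Bool)} (hfin : C.Finite) {d : ℕ} (h : LdimGe C d) :
    d ≤ LdimNat C :=
  le_csSup (bddAbove_ldimSet hfin) h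

lemma ldim_toNat [Nonempty X] {C : Set (X → Bool)} (hfin : C.Finite) (hne : C.Nonempty) :
    (Ldim C).toNat = LdimNat C := by
  have : Ldim C = (LdimNat C : ℕ∞) := by
    apply le_antisymm
    · apply sSup_le
      rintro n ⟨d, rfl, hd⟩
      exact_mod_cast le_ldimNat hfin hd
    · exact le_sSup ⟨LdimNat C, rfl, ldimGe_ldimNat hfin hne⟩
  rw [this]; simp

lemma key_ineq [Nonempty X] {C : Set (X → Bool)} (hfin : C.Finite) {a : X} {A B : X → Bool}
    (hA : A ∈ C) (hB : B ∈ C) (hab : A a ≠ B a) :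
    LdimNat {f ∈ C | f a = A a} + LdimNat {f ∈ C | f a = B a} + 1 ≤ 2 * LdimNat C := by
  set DA := {f ∈ C | f a = A a} with hDA
  set DB := {f ∈ C | f a = B a} with hDB
  have hfA : DA.Finite := hfin.subset fun f hf => hf.1
  have hfB : DB.Finite := hfin.subset fun f hf => hf.1
  have hneA : DA.Nonempty := ⟨A, hA, rfl⟩
  have hneB : DB.Nonempty := ⟨B, hB, rfl⟩
  set m := min (LdimNat DA) (LdimNat DB) with hm
  have hgA : LdimGe DA m := ldimGe_mono_nat (min_le_left _ _) (ldimGe_ldimNat hfA hneA)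
  have hgB : LdimGe DB m := ldimGe_mono_nat (min_le_right _ _) (ldimGe_ldimNat hfB hneB)
  have hcomb : LdimGe C (m + 1) := by
    cases hAa : A a <;> cases hBa : B a <;> simp [hAa, hBa] at hab ⊢
    · rw [hDA, hAa] at hgA; rw [hDB, hBa] at hgB
      exact ldimGe_combine hgA hgB
    · rw [hDA, hAa] at hgA; rw [hDB, hBa] at hgB
      exact ldimGe_combine hgB hgA
  have h1 : m + 1 ≤ LdimNat C := le_ldimNat hfin hcomb
  have h2 : LdimNat DA ≤ LdimNat C :=
    le_ldimNat hfin (ldimGe_mono_set (fun f hf => hf.1) (ldimGe_ldimNat hfA hneA))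
  have h3 : LdimNat DB ≤ LdimNat C :=
    le_ldimNat hfin (ldimGe_mono_set (fun f hf => hf.1) (ldimGe_ldimNat hfB hneB))
  omega

end Aux

theorem stmt_18 {X : Type*} [Fintype X] (C : Set (X → Bool)) (hfin : C.Finite)
    (hne : C.Nonempty) (μ : X → ℝ) (hpos : ∀ x, 0 < μ x) (hsum : ∑ x, μ x = 1) :
    ∃ A ∈ C, ∀ B ∈ C, B ≠ A → (1 : ℝ) / 2 ≤ edgeWeight C μ A B := by
  have hX : Nonempty X := by
    by_contra h
    rw [not_nonempty_iff] at h
    rw [Finset.univ_eq_empty, Finset.sum_empty] at hsum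
    norm_num at hsum
  set L : ℕ := LdimNat C with hLdef
  let ℓ : X → Bool → ℕ := fun x b => LdimNat {f ∈ C | f x = b}
  let Φ : (X → Bool) → ℝ := fun f => ∑ x, μ x * (ℓ x (f x) : ℝ)
  obtain ⟨A, hAmem, hmax⟩ := hfin.toFinset.exists_max_image Φ
    (by rwa [Set.Finite.toFinset_nonempty])
  rw [Set.Finite.mem_toFinset] at hAmem
  refine ⟨A, hAmem, fun B hB hBA => ?_⟩
  -- the symmetric difference
  set Δ : Finset X := Finset.univ.filter (fun x => A x ≠ B x) with hΔdef
  have hΔne : Δ.Nonempty := by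
    rcases Function.ne_iff.mp (Ne.symm hBA) with ⟨x, hx⟩
    exact ⟨x, by simp only [hΔdef, Finset.mem_filter, Finset.mem_univ, true_and]; exact hx⟩
  have hS : (0 : ℝ) < ∑ b ∈ Δ, μ b := Finset.sum_pos (fun b _ => hpos b) hΔne
  set S : ℝ := ∑ b ∈ Δ, μ b with hSdef
  -- rewrite edgeWeight
  have hsub : ∀ a : X, ∀ b : Bool, ({f ∈ C | f a = b} : Set (X → Bool)).Finite :=
    fun a b => hfin.subset fun f hf => hf.1
  have htoNatC : ((Ldim C).toNat : ℝ) = (L : ℝ) := by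
    rw [ldim_toNat hfin hne]
  have htoNat : ∀ a ∈ Δ, ((Ldim {f ∈ C | f a = B a}).toNat : ℝ) = (ℓ a (B a) : ℝ) := by
    intro a _
    rw [ldim_toNat (hsub a (B a)) ⟨B, hB, rfl⟩]
  have hEW : edgeWeight C μ A B = (∑ a ∈ Δ, μ a * ((L : ℝ) - (ℓ a (B a) : ℝ))) / S := by
    rw [edgeWeight, Finset.sum_div]
    refine Finset.sum_congr rfl fun a ha => ?_
    rw [htoNatC, htoNat a ha]
    ring
  -- pointwise key inequality
  have hkey : ∀ a ∈ Δ, (ℓ a (A a) : ℝ) + (ℓ a (B a) : ℝ) + 1 ≤ 2 * (L : ℝ) := by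
    intro a ha
    have hab : A a ≠ B a := by simpa [hΔdef] using ha
    have := key_ineq hfin hAmem hB hab
    exact_mod_cast this
  -- Φ maximality restricted to Δ
  have hΦ : Φ B ≤ Φ A := hmax B (by rwa [Set.Finite.mem_toFinset])
  have hsplit : ∀ f : X → Bool,
      Φ f = (∑ a ∈ Δ, μ a * (ℓ a (f a) : ℝ)) + ∑ a ∈ Finset.univ.filter (fun x => ¬ A x ≠ B x), μ a * (ℓ a (f a) : ℝ) := by
    intro f
    rw [hΔdef, Finset.sum_filter_add_sum_filter_not]
  have hoff : ∑ a ∈ Finset.univ.filter (fun x => ¬ A x ≠ B x), μ a * (ℓ a (B a) : ℝ)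
      = ∑ a ∈ Finset.univ.filter (fun x => ¬ A x ≠ B x), μ a * (ℓ a (A a) : ℝ) := by
    refine Finset.sum_congr rfl fun a ha => ?_
    have : A a = B a := by simpa using ha
    rw [this]
  have hΔineq : ∑ a ∈ Δ, μ a * (ℓ a (B a) : ℝ) ≤ ∑ a ∈ Δ, μ a * (ℓ a (A a) : ℝ) := by
    have h1 := hΦ
    rw [hsplit A, hsplit B, hoff] at h1
    linarith
  -- sum of key inequality
  have hsumkey : ∑ a ∈ Δ, μ a * ((ℓ a (A a) : ℝ) + (ℓ a (B a) : ℝ) + 1)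
      ≤ ∑ a ∈ Δ, μ a * (2 * (L : ℝ)) := by
    refine Finset.sum_le_sum fun a ha => ?_
    exact mul_le_mul_of_nonneg_left (hkey a ha) (hpos a).le
  have hexp : (∑ a ∈ Δ, μ a * (ℓ a (A a) : ℝ)) + (∑ a ∈ Δ, μ a * (ℓ a (B a) : ℝ)) + S
      ≤ 2 * (L : ℝ) * S := by
    have e1 : ∑ a ∈ Δ, μ a * ((ℓ a (A a) : ℝ) + (ℓ a (B a) : ℝ) + 1)
        = (∑ a ∈ Δ, μ a * (ℓ a (A a) : ℝ)) + (∑ a ∈ Δ, μ a * (ℓ a (B a) : ℝ)) + S := by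
      rw [hSdef, ← Finset.sum_add_distrib, ← Finset.sum_add_distrib]
      exact Finset.sum_congr rfl fun a _ => by ring
    have e2 : ∑ a ∈ Δ, μ a * (2 * (L : ℝ)) = 2 * (L : ℝ) * S := by
      rw [hSdef, ← Finset.sum_mul, mul_comm]
    linarith [hsumkey, e1.symm.le, e2.le]
  -- conclude
  rw [hEW, le_div_iff₀ hS]
  have hexpand : ∑ a ∈ Δ, μ a * ((L : ℝ) - (ℓ a (B a) : ℝ))
      = (L : ℝ) * S - ∑ a ∈ Δ, μ a * (ℓ a (B a) : ℝ) := by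
    rw [hSdef, Finset.mul_sum, ← Finset.sum_sub_distrib]
    exact Finset.sum_congr rfl fun a _ => by ring
  rw [hexpand]
  linarith
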